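/- Let H(s) be a twice continuously differentiable path of Hermitian matrices with an isolated eigenvalue λ_0(s) whose distance to the rest of the spectrum is at least g(s) > 0, and let P(s) be the corresponding spectral projector. Then ‖P''(s)‖ ≤ 8‖H'(s)‖²/g(s)² + 2‖H''(s)‖/g(s). -/

import Mathlib

open scoped InnerProductSpace

section Helpers

/-- A self-adjoint idempotent is a contraction. -/
lemma sa_idem_apply_norm_le {E : Type*} [NormedAddCommGroup E] [InnerProductSpace ℂ E]
    [CompleteSpace E] (R : E →L[ℂ] E) (hsa : ContinuousLinearMap.adjoint R = R)
    (hid : R * R = R) (v : E) : ‖R v‖ ≤ ‖v‖ := by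
  rcases eq_or_lt_of_le (norm_nonneg (R v)) with h0 | h0
  · rw [← h0]; positivity
  have h1 := ContinuousLinearMap.adjoint_inner_left R (R v) v
  rw [hsa] at h1
  have h2 : R (R v) = R v := by
    conv_lhs => rw [← ContinuousLinearMap.mul_apply, hid]
  rw [h2] at h1
  have h3 : ‖R v‖ ^ 2 = RCLike.re (inner ℂ v (R v) : ℂ) := by
    rw [← h1, inner_self_eq_norm_sq]
  have h4 : RCLike.re (inner ℂ v (R v) : ℂ) ≤ ‖(inner ℂ v (R v) : ℂ)‖ := RCLike.re_le_norm _
  have h5 : ‖(inner ℂ v (R v) : ℂ)‖ ≤ ‖v‖ * ‖R v‖ := norm_inner_le_norm _ _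
  nlinarith [norm_nonneg v]

lemma sa_idem_norm_le {E : Type*} [NormedAddCommGroup E] [InnerProductSpace ℂ E]
    [CompleteSpace E] (R : E →L[ℂ] E) (hsa : ContinuousLinearMap.adjoint R = R)
    (hid : R * R = R) : ‖R‖ ≤ 1 := by
  refine ContinuousLinearMap.opNorm_le_bound _ zero_le_one (fun v => ?_)
  rw [one_mul]
  exact sa_idem_apply_norm_le R hsa hid v

lemma orth_inner_zero {E : Type*} [NormedAddCommGroup E] [InnerProductSpace ℂ E]
    [CompleteSpace E] (R : E →L[ℂ] E) (hsa : ContinuousLinearMap.adjoint R = R)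
    (hid : R * R = R) (a b : E) : ⟪R a, (1 - R) b⟫_ℂ = 0 := by
  have h1 := ContinuousLinearMap.adjoint_inner_left R a ((1 - R) b)
  rw [hsa] at h1
  have h2 : R ((1 - R) b) = 0 := by
    rw [← ContinuousLinearMap.mul_apply, mul_sub, mul_one, hid, sub_self,
      ContinuousLinearMap.zero_apply]
  rw [h2] at h1
  have h3 : ⟪(1 - R) b, R a⟫_ℂ = 0 := by rw [← h1, inner_zero_left]
  rw [← inner_conj_symm, h3, map_zero]

lemma block_norm_le {E : Type*} [NormedAddCommGroup E] [InnerProductSpace ℂ E]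
    [CompleteSpace E] (R T Y Z : E →L[ℂ] E)
    (hRsa : ContinuousLinearMap.adjoint R = R) (hRid : R * R = R)
    (hTsa : ContinuousLinearMap.adjoint T = T) (hTid : T * T = T)
    (hY1 : R * Y = Y) (hZ1 : (1 - R) * Z = Z)
    (hY2 : Y * T = Y) (hZ2 : Z * (1 - T) = Z) :
    ‖Y + Z‖ ≤ max ‖Y‖ ‖Z‖ := by
  have hM : (0:ℝ) ≤ max ‖Y‖ ‖Z‖ := le_max_of_le_left (norm_nonneg Y)
  refine ContinuousLinearMap.opNorm_le_bound _ hM (fun v => ?_)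
  set M := max ‖Y‖ ‖Z‖ with hMdef
  have horth : ⟪Y v, Z v⟫_ℂ = 0 := by
    have := orth_inner_zero R hRsa hRid (Y v) (Z v)
    rwa [show R (Y v) = Y v by rw [← ContinuousLinearMap.mul_apply, hY1],
      show (1 - R) (Z v) = Z v by rw [← ContinuousLinearMap.mul_apply, hZ1]] at this
  have hpyth : ‖Y v + Z v‖ ^ 2 = ‖Y v‖ ^ 2 + ‖Z v‖ ^ 2 := by
    rw [norm_add_sq (𝕜 := ℂ), horth]; simp
  have horth2 : ⟪T v, (1 - T) v⟫_ℂ = 0 := orth_inner_zero T hTsa hTid v v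
  have hpyth2 : ‖v‖ ^ 2 = ‖T v‖ ^ 2 + ‖(1 - T) v‖ ^ 2 := by
    have hv : T v + (1 - T) v = v := by
      simp [ContinuousLinearMap.sub_apply]
    rw [← hv, norm_add_sq (𝕜 := ℂ), horth2]; simp
  have hYb : ‖Y v‖ ≤ ‖Y‖ * ‖T v‖ := by
    rw [show Y v = Y (T v) by rw [← ContinuousLinearMap.mul_apply, hY2]]
    exact ContinuousLinearMap.le_opNorm _ _
  have hZb : ‖Z v‖ ≤ ‖Z‖ * ‖(1 - T) v‖ := by
    rw [show Z v = Z ((1 - T) v) by rw [← ContinuousLinearMap.mul_apply, hZ2]]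
    exact ContinuousLinearMap.le_opNorm _ _
  have hYM : ‖Y‖ ≤ M := le_max_left _ _
  have hZM : ‖Z‖ ≤ M := le_max_right _ _
  have hsq : ‖(Y + Z) v‖ ^ 2 ≤ (M * ‖v‖) ^ 2 := by
    rw [ContinuousLinearMap.add_apply, hpyth]
    have h1 : ‖Y v‖ ^ 2 ≤ (M * ‖T v‖) ^ 2 := by
      have : ‖Y v‖ ≤ M * ‖T v‖ :=
        hYb.trans (mul_le_mul_of_nonneg_right hYM (norm_nonneg _))
      nlinarith [norm_nonneg (Y v)]
    have h2 : ‖Z v‖ ^ 2 ≤ (M * ‖(1 - T) v‖) ^ 2 := by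
      have : ‖Z v‖ ≤ M * ‖(1 - T) v‖ :=
        hZb.trans (mul_le_mul_of_nonneg_right hZM (norm_nonneg _))
      nlinarith [norm_nonneg (Z v)]
    have h3 : (M * ‖v‖) ^ 2 = M ^ 2 * ‖T v‖ ^ 2 + M ^ 2 * ‖(1 - T) v‖ ^ 2 := by
      rw [mul_pow, hpyth2]; ring
    nlinarith [h1, h2]
  have hs := Real.sqrt_le_sqrt hsq
  rwa [Real.sqrt_sq (norm_nonneg _), Real.sqrt_sq (by positivity)] at hs

lemma gap_bound {n : ℕ} (T : EuclideanSpace ℂ (Fin n) →L[ℂ] EuclideanSpace ℂ (Fin n))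
    (hsa : ContinuousLinearMap.adjoint T = T) (g : ℝ) (hg : 0 < g)
    (hgap : ∀ μ ∈ spectrum ℂ T, μ ≠ 0 → g ≤ ‖μ‖)
    (w : EuclideanSpace ℂ (Fin n)) (hw : ∀ u, T u = 0 → ⟪u, w⟫_ℂ = 0) :
    g * ‖w‖ ≤ ‖T w‖ := by
  have hT : IsSelfAdjoint T := by
    rw [IsSelfAdjoint, ContinuousLinearMap.star_eq_adjoint, hsa]
  have hsym : (T : EuclideanSpace ℂ (Fin n) →ₗ[ℂ] EuclideanSpace ℂ (Fin n)).IsSymmetric :=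
    hT.isSymmetric
  have hn : Module.finrank ℂ (EuclideanSpace ℂ (Fin n)) = n := finrank_euclideanSpace_fin
  set b := hsym.eigenvectorBasis hn with hb
  set ev := hsym.eigenvalues hn with hev
  have hevb : ∀ i, ev i ≠ 0 → g ≤ |ev i| := by
    intro i hne
    have hmem : ((ev i : ℝ) : ℂ) ∈ spectrum ℂ T := by
      rw [spectrum.mem_iff]
      intro hU
      have heq : (algebraMap ℂ _ ((ev i : ℝ) : ℂ) - T) (b i) = 0 := by
        have happ : T (b i) = ((ev i : ℝ) : ℂ) • b i := hsym.apply_eigenvectorBasis hn i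
        simp [ContinuousLinearMap.sub_apply, Algebra.algebraMap_eq_smul_one, happ]
      obtain ⟨u, hu⟩ := hU
      have hbz : b i = 0 := by
        calc b i = ((↑u⁻¹ * ↑u : EuclideanSpace ℂ (Fin n) →L[ℂ] EuclideanSpace ℂ (Fin n))) (b i)
              := by rw [u.inv_mul]; rfl
        _ = (↑u⁻¹ : EuclideanSpace ℂ (Fin n) →L[ℂ] EuclideanSpace ℂ (Fin n))
              ((↑u : EuclideanSpace ℂ (Fin n) →L[ℂ] EuclideanSpace ℂ (Fin n)) (b i)) := rfl
        _ = (↑u⁻¹ : EuclideanSpace ℂ (Fin n) →L[ℂ] EuclideanSpace ℂ (Fin n)) 0 := by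
              rw [hu, heq]
        _ = 0 := map_zero _
      exact b.toBasis.ne_zero i (by simpa using hbz)
    have := hgap _ hmem (by simpa using hne)
    simpa using this
  set c : Fin n → ℂ := fun i => b.repr w i with hc
  have hTc : ∀ i, b.repr (T w) i = (ev i : ℂ) * c i := fun i =>
    hsym.eigenvectorBasis_apply_self_apply hn w i
  have hzero : ∀ i, ev i = 0 → c i = 0 := by
    intro i h0
    have hbi : T (b i) = 0 := by
      have happ : T (b i) = ((ev i : ℝ) : ℂ) • b i := hsym.apply_eigenvectorBasis hn i
      rw [happ, h0]; simp
    have := hw (b i) hbi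
    rw [hc]; simpa [OrthonormalBasis.repr_apply_apply] using this
  have hwn : ‖w‖ ^ 2 = ∑ i, ‖c i‖ ^ 2 := by
    rw [← b.repr.norm_map w, EuclideanSpace.norm_eq, Real.sq_sqrt (by positivity)]
  have hTn : ‖T w‖ ^ 2 = ∑ i, ‖(ev i : ℂ) * c i‖ ^ 2 := by
    rw [← b.repr.norm_map (T w), EuclideanSpace.norm_eq, Real.sq_sqrt (by positivity)]
    exact Finset.sum_congr rfl fun i _ => by rw [hTc i]
  have hterm : ∀ i, g ^ 2 * ‖c i‖ ^ 2 ≤ ‖(ev i : ℂ) * c i‖ ^ 2 := by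
    intro i
    by_cases h0 : ev i = 0
    · simp [hzero i h0]
    · have h1 := hevb i h0
      rw [norm_mul, Complex.norm_real, Real.norm_eq_abs]
      have h2 : g ^ 2 ≤ |ev i| ^ 2 := by nlinarith [abs_nonneg (ev i)]
      nlinarith [sq_nonneg (‖c i‖), norm_nonneg (c i)]
  have hsum : g ^ 2 * ‖w‖ ^ 2 ≤ ‖T w‖ ^ 2 := by
    rw [hwn, hTn, Finset.mul_sum]
    exact Finset.sum_le_sum fun i _ => hterm i
  have hs := Real.sqrt_le_sqrt hsum
  rwa [show g ^ 2 * ‖w‖ ^ 2 = (g * ‖w‖) ^ 2 by ring, Real.sqrt_sq (by positivity),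
    Real.sqrt_sq (norm_nonneg _)] at hs

lemma gap_opnorm {n : ℕ} (T Y : EuclideanSpace ℂ (Fin n) →L[ℂ] EuclideanSpace ℂ (Fin n))
    (hsa : ContinuousLinearMap.adjoint T = T) (g : ℝ) (hg : 0 < g)
    (hgap : ∀ μ ∈ spectrum ℂ T, μ ≠ 0 → g ≤ ‖μ‖)
    (hperp : ∀ v u, T u = 0 → ⟪u, Y v⟫_ℂ = 0) :
    ‖Y‖ ≤ ‖T * Y‖ / g := by
  refine ContinuousLinearMap.opNorm_le_bound _ (by positivity) (fun v => ?_)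
  have h1 := gap_bound T hsa g hg hgap (Y v) (fun u hu => hperp v u hu)
  have h2 : ‖T (Y v)‖ ≤ ‖T * Y‖ * ‖v‖ := by
    rw [← ContinuousLinearMap.mul_apply]
    exact ContinuousLinearMap.le_opNorm _ _
  rw [div_mul_eq_mul_div, le_div_iff₀ hg]
  calc ‖Y v‖ * g = g * ‖Y v‖ := mul_comm _ _
  _ ≤ ‖T (Y v)‖ := h1
  _ ≤ ‖T * Y‖ * ‖v‖ := h2

lemma star_deriv {n : ℕ} (F F' : ℝ → (EuclideanSpace ℂ (Fin n) →L[ℂ] EuclideanSpace ℂ (Fin n)))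
    (hd : ∀ t, HasDerivAt F (F' t) t) (hstar : ∀ t, star (F t) = F t) (t : ℝ) :
    star (F' t) = F' t := by
  set e := (starL' ℝ (A := EuclideanSpace ℂ (Fin n) →L[ℂ] EuclideanSpace ℂ (Fin n)))
  have h1 : HasDerivAt (fun u => e.toContinuousLinearMap (F u))
      (e.toContinuousLinearMap (F' t)) t :=
    e.toContinuousLinearMap.hasFDerivAt.comp_hasDerivAt t (hd t)
  have h2 : (fun u => e.toContinuousLinearMap (F u)) = F := by
    funext u
    show star (F u) = F u
    exact hstar u
  rw [h2] at h1
  exact h1.unique (hd t)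

end Helpers

set_option maxHeartbeats 2000000 in
theorem spectral_projector_second_deriv_bound {n : ℕ}
    (H H' H'' P P' P'' : ℝ → (EuclideanSpace ℂ (Fin n) →L[ℂ] EuclideanSpace ℂ (Fin n)))
    (lam0 g : ℝ → ℝ)
    (hHderiv : ∀ s, HasDerivAt H (H' s) s)
    (hH'deriv : ∀ s, HasDerivAt H' (H'' s) s)
    (hH''cont : Continuous H'')
    (hHsa : ∀ s, ContinuousLinearMap.adjoint (H s) = H s)
    (hPsa : ∀ s, ContinuousLinearMap.adjoint (P s) = P s)
    (hPidem : ∀ s, P s ∘L P s = P s)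
    (hPderiv : ∀ s, HasDerivAt P (P' s) s)
    (hP'deriv : ∀ s, HasDerivAt P' (P'' s) s)
    (heig : ∀ s, H s ∘L P s = lam0 s • P s)
    (hfull : ∀ s, ∀ v, H s v = lam0 s • v → P s v = v)
    (hg : ∀ s, 0 < g s)
    (hgap : ∀ s, ∀ μ ∈ spectrum ℂ (H s), μ ≠ (lam0 s : ℂ) → g s ≤ ‖μ - (lam0 s : ℂ)‖)
    (s : ℝ) :
    ‖P'' s‖ ≤ 8 * ‖H' s‖ ^ 2 / (g s) ^ 2 + 2 * ‖H'' s‖ / g s := by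
  -- commutation of H and P
  have hcomm : ∀ t, H t * P t = P t * H t := by
    intro t
    have h1 : ContinuousLinearMap.adjoint (H t ∘L P t) = P t ∘L H t := by
      rw [ContinuousLinearMap.adjoint_comp, hPsa, hHsa]
    have h2 : ContinuousLinearMap.adjoint (H t ∘L P t) = H t ∘L P t := by
      rw [heig t, ← ContinuousLinearMap.star_eq_adjoint, star_smul, star_trivial,
        ContinuousLinearMap.star_eq_adjoint, hPsa, ← heig t]
    rw [ContinuousLinearMap.mul_def, ContinuousLinearMap.mul_def, ← h2, h1]
  have hPidem' : ∀ t, P t * P t = P t := fun t => by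
    rw [ContinuousLinearMap.mul_def]; exact hPidem t
  -- first and second derivative identities
  have d1 : ∀ t, P' t * P t + P t * P' t = P' t := by
    intro t
    have h1 : HasDerivAt (fun u => P u * P u) (P' t * P t + P t * P' t) t :=
      (hPderiv t).mul (hPderiv t)
    rw [show (fun u => P u * P u) = P from funext hPidem'] at h1
    exact h1.unique (hPderiv t)
  have d2 : (P'' s * P s + P' s * P' s) + (P' s * P' s + P s * P'' s) = P'' s := by
    have h1 : HasDerivAt (fun u => P' u * P u + P u * P' u)
        ((P'' s * P s + P' s * P' s) + (P' s * P' s + P s * P'' s)) s :=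
      ((hP'deriv s).mul (hPderiv s)).add ((hPderiv s).mul (hP'deriv s))
    rw [show (fun u => P' u * P u + P u * P' u) = P' from funext d1] at h1
    exact h1.unique (hP'deriv s)
  have c1 : ∀ t, H' t * P t + H t * P' t = P' t * H t + P t * H' t := by
    intro t
    have h1 : HasDerivAt (fun u => H u * P u) (H' t * P t + H t * P' t) t :=
      (hHderiv t).mul (hPderiv t)
    have h2 : HasDerivAt (fun u => P u * H u) (P' t * H t + P t * H' t) t :=
      (hPderiv t).mul (hHderiv t)
    rw [show (fun u => H u * P u) = (fun u => P u * H u) from funext hcomm] at h1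
    exact h1.unique h2
  have c2 : (H'' s * P s + H' s * P' s) + (H' s * P' s + H s * P'' s)
      = (P'' s * H s + P' s * H' s) + (P' s * H' s + P s * H'' s) := by
    have h1 : HasDerivAt (fun u => H' u * P u + H u * P' u)
        ((H'' s * P s + H' s * P' s) + (H' s * P' s + H s * P'' s)) s :=
      ((hH'deriv s).mul (hPderiv s)).add ((hHderiv s).mul (hP'deriv s))
    have h2 : HasDerivAt (fun u => P' u * H u + P u * H' u)
        ((P'' s * H s + P' s * H' s) + (P' s * H' s + P s * H'' s)) s :=
      ((hP'deriv s).mul (hHderiv s)).add ((hPderiv s).mul (hH'deriv s))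
    rw [show (fun u => H' u * P u + H u * P' u) = (fun u => P' u * H u + P u * H' u)
      from funext c1] at h1
    exact h1.unique h2
  -- self-adjointness of derivatives
  have hstarPt : ∀ t, star (P t) = P t := fun t => by
    rw [ContinuousLinearMap.star_eq_adjoint, hPsa]
  have hstarP' : ∀ t, star (P' t) = P' t := star_deriv P P' hPderiv hstarPt
  have hstarP'' : star (P'' s) = P'' s := star_deriv P' P'' hP'deriv hstarP' s
  -- instantiate at the point s and pass to ring notation
  have d1s := d1 s
  have c1s := c1 s
  have d2s := d2
  have c2s := c2
  have hcs := hcomm s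
  have heigs : H s * P s = lam0 s • P s := by
    rw [ContinuousLinearMap.mul_def]; exact heig s
  have hPsas := hPsa s
  have hHsas := hHsa s
  have hstarp := hstarPt s
  have hstardp := hstarP' s
  have hstarddp := hstarP''
  have hGpos := hg s
  set p := P s with hp_def
  set dp := P' s with hdp_def
  set ddp := P'' s with hddp_def
  set hh := H s with hh_def
  set dH := H' s with hdH_def
  set ddH := H'' s with hddH_def
  set G := g s with hG_def
  set l := lam0 s with hl_def
  have hpp : p * p = p := hPidem' s
  have hhp : hh * p = ((l : ℂ)) • p := by
    rw [heigs]
    exact (Complex.coe_smul l p).symm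
  have hph : p * hh = hh * p := hcs.symm
  -- the complementary projection
  set q : EuclideanSpace ℂ (Fin n) →L[ℂ] EuclideanSpace ℂ (Fin n) := 1 - p with hq_def
  have hstarq : star q = q := by
    have : star q = star (1:EuclideanSpace ℂ (Fin n) →L[ℂ] EuclideanSpace ℂ (Fin n)) - star p :=
      star_sub 1 p
    rw [this, star_one, hstarp]
  have hqadj : ContinuousLinearMap.adjoint q = q := by
    rw [← ContinuousLinearMap.star_eq_adjoint, hstarq]
  have hpq : p * q = 0 := by
    rw [hq_def, mul_sub, mul_one, hpp, sub_self]
  have hqp : q * p = 0 := by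
    rw [hq_def, sub_mul, one_mul, hpp, sub_self]
  have hqq : q * q = q := by
    rw [hq_def, sub_mul, one_mul, mul_sub, mul_one, hpp]
    abel
  have hpq1 : p + q = 1 := by rw [hq_def]; abel
  have hqh : q * hh = hh * q := by
    rw [hq_def, sub_mul, one_mul, mul_sub, mul_one, hph]
  -- associativity helpers
  have hpp' : ∀ X, p * (p * X) = p * X := fun X => by rw [← mul_assoc, hpp]
  have hqq' : ∀ X, q * (q * X) = q * X := fun X => by rw [← mul_assoc, hqq]
  have hpq' : ∀ X, p * (q * X) = 0 := fun X => by rw [← mul_assoc, hpq, zero_mul]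
  have hqp' : ∀ X, q * (p * X) = 0 := fun X => by rw [← mul_assoc, hqp, zero_mul]
  have hqh' : ∀ X, q * (hh * X) = hh * (q * X) := fun X => by
    rw [← mul_assoc, hqh, mul_assoc]
  -- norms of the projections
  have np : ‖p‖ ≤ 1 := sa_idem_norm_le p hPsas hpp
  have nq : ‖q‖ ≤ 1 := sa_idem_norm_le q hqadj hqq
  have hqXp : ∀ X : EuclideanSpace ℂ (Fin n) →L[ℂ] EuclideanSpace ℂ (Fin n),
      ‖q * (X * p)‖ ≤ ‖X‖ := by
    intro X
    calc ‖q * (X * p)‖ ≤ ‖q‖ * ‖X * p‖ := norm_mul_le _ _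
    _ ≤ 1 * ‖X * p‖ := mul_le_mul_of_nonneg_right nq (norm_nonneg _)
    _ = ‖X * p‖ := one_mul _
    _ ≤ ‖X‖ * ‖p‖ := norm_mul_le _ _
    _ ≤ ‖X‖ * 1 := mul_le_mul_of_nonneg_left np (norm_nonneg _)
    _ = ‖X‖ := mul_one _
  -- key algebraic identities
  have hppp : p * (dp * p) = 0 := by
    have h := congrArg (fun X => p * X * p) d1s
    simp only [mul_add, add_mul, mul_assoc, hpp, hpp'] at h
    exact add_eq_left.mp h
  have hqdpq : q * (dp * q) = 0 := by
    have h := congrArg (fun X => q * X * q) d1s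
    simp only [mul_add, add_mul, mul_assoc, hpq, hqp', mul_zero, add_zero, zero_add] at h
    exact h.symm
  have hqdp : q * dp = q * (dp * p) := by
    have h : q * (dp * (p + q)) = q * (dp * p) + q * (dp * q) := by rw [mul_add, mul_add]
    rw [hpq1, mul_one] at h
    rw [h, hqdpq, add_zero]
  have hdpp : dp * p = q * (dp * p) := by
    have h : (p + q) * (dp * p) = p * (dp * p) + q * (dp * p) := add_mul _ _ _
    rw [hpq1, one_mul] at h
    conv_lhs => rw [h]
    rw [hppp, zero_add]
  have hpdp : p * dp = p * (dp * q) := by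
    have h : p * (dp * (p + q)) = p * (dp * p) + p * (dp * q) := by rw [mul_add, mul_add]
    rw [hpq1, mul_one] at h
    rw [h, hppp, zero_add]
  have hdpq : dp * q = p * (dp * q) := by
    have h : (p + q) * (dp * q) = p * (dp * q) + q * (dp * q) := add_mul _ _ _
    rw [hpq1, one_mul] at h
    conv_lhs => rw [h]
    rw [hqdpq, add_zero]
  -- the shifted operator A = H - λ₀
  set A : EuclideanSpace ℂ (Fin n) →L[ℂ] EuclideanSpace ℂ (Fin n) := hh - (l : ℂ) • 1
    with hA_def
  have hAX : ∀ X, A * X = hh * X - (l : ℂ) • X := by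
    intro X
    rw [hA_def, sub_mul, smul_mul_assoc, one_mul]
  have hAsa : ContinuousLinearMap.adjoint A = A := by
    rw [← ContinuousLinearMap.star_eq_adjoint, hA_def]
    simp only [star_sub, star_smul, star_one, Complex.star_def, Complex.conj_ofReal]
    rw [ContinuousLinearMap.star_eq_adjoint, hHsas]
  have hgapA : ∀ μ ∈ spectrum ℂ A, μ ≠ 0 → G ≤ ‖μ‖ := by
    intro μ hμ hne
    have key : algebraMap ℂ _ (μ + (l : ℂ)) - hh = algebraMap ℂ _ μ - A := by
      rw [map_add, hA_def, Algebra.algebraMap_eq_smul_one ((l:ℂ))]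
      abel
    have h1 : μ + (l : ℂ) ∈ spectrum ℂ hh := by
      rw [spectrum.mem_iff] at hμ ⊢
      rw [key]; exact hμ
    have h2 : μ + (l : ℂ) ≠ (l : ℂ) := fun hc => hne (add_eq_right.mp hc)
    have h3 := hgap s (μ + (l:ℂ)) h1 h2
    rwa [add_sub_cancel_right] at h3
  have hperp : ∀ X : EuclideanSpace ℂ (Fin n) →L[ℂ] EuclideanSpace ℂ (Fin n),
      ∀ v u, A u = 0 → ⟪u, (q * X) v⟫_ℂ = 0 := by
    intro X v u hu
    have h1 : A u = hh u - (l:ℂ) • u := by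
      rw [hA_def]
      simp [ContinuousLinearMap.sub_apply, ContinuousLinearMap.smul_apply]
    rw [h1] at hu
    have hHu : hh u = (l:ℂ) • u := sub_eq_zero.mp hu
    have hPu : p u = u := by
      apply hfull s u
      rw [show H s u = hh u from rfl, hHu, Complex.coe_smul]
    have hqu : q u = 0 := by
      rw [hq_def]
      simp [ContinuousLinearMap.sub_apply, hPu]
    have h2 : (q * X) v = q (X v) := ContinuousLinearMap.mul_apply _ _ _
    rw [h2, ← hqadj, ContinuousLinearMap.adjoint_inner_right, hqu, inner_zero_left]
  have hgapop : ∀ X : EuclideanSpace ℂ (Fin n) →L[ℂ] EuclideanSpace ℂ (Fin n),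
      ‖q * X‖ ≤ ‖A * (q * X)‖ / G := fun X =>
    gap_opnorm A (q * X) hAsa G hGpos hgapA (fun v u hu => hperp X v u hu)
  -- first-order resolvent identity
  have hAe : A * (q * (dp * p)) = -(q * (dH * p)) := by
    have h := congrArg (fun X => q * X * p) c1s
    simp only [mul_add, add_mul, mul_assoc, hpp, hqp', hqh', hhp, mul_smul_comm,
      mul_zero, zero_mul, add_zero, zero_add] at h
    rw [hAX]
    have h2 := sub_eq_zero.mpr h
    have h3 : (hh * (q * (dp * p)) - (↑l : ℂ) • (q * (dp * p))) - (-(q * (dH * p))) = 0 := by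
      rw [← h2]; abel
    exact sub_eq_zero.mp h3
  -- second-order resolvent identity
  have hAY : A * (q * (ddp * p)) = (q * (dp * (dH * p)) + q * (dp * (dH * p)))
      - (q * (dH * (dp * p)) + q * (dH * (dp * p))) - q * (ddH * p) := by
    have h := congrArg (fun X => q * X * p) c2s
    simp only [mul_add, add_mul, mul_assoc, hpp, hqp', hqh', hhp, mul_smul_comm,
      mul_zero, zero_mul, add_zero, zero_add] at h
    rw [hAX]
    have h2 := sub_eq_zero.mpr h
    have h3 : (hh * (q * (ddp * p)) - (↑l : ℂ) • (q * (ddp * p)))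
        - ((q * (dp * (dH * p)) + q * (dp * (dH * p)))
          - (q * (dH * (dp * p)) + q * (dH * (dp * p))) - q * (ddH * p)) = 0 := by
      rw [← h2]; abel
    exact sub_eq_zero.mp h3
  -- diagonal identities
  have hdiag1 : p * (ddp * p) = -(p * (dp * (dp * p)) + p * (dp * (dp * p))) := by
    have h := congrArg (fun X => p * X * p) d2s
    simp only [mul_add, add_mul, mul_assoc, hpp, hpp', hpq', hqp',
      mul_zero, zero_mul, add_zero, zero_add] at h
    have h2 := sub_eq_zero.mpr h
    have h3 : p * (ddp * p) + (p * (dp * (dp * p)) + p * (dp * (dp * p))) = 0 := by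
      rw [← h2]; abel
    exact eq_neg_of_add_eq_zero_left h3
  have hdiag2 : q * (ddp * q) = q * (dp * (dp * q)) + q * (dp * (dp * q)) := by
    have h := congrArg (fun X => q * X * q) d2s
    simp only [mul_add, add_mul, mul_assoc, hpq, hqp', hqq', hpq',
      mul_zero, zero_mul, add_zero, zero_add] at h
    exact h.symm
  -- norm of the first-order off-diagonal block
  have he_bound : ‖q * (dp * p)‖ ≤ ‖dH‖ / G := by
    have h1 := hgapop (dp * p)
    rw [hAe, norm_neg] at h1
    have h2 : ‖q * (dH * p)‖ ≤ ‖dH‖ := hqXp dH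
    calc ‖q * (dp * p)‖ ≤ ‖q * (dH * p)‖ / G := h1
    _ ≤ ‖dH‖ / G := by gcongr
  have hfeq : ‖p * (dp * q)‖ = ‖q * (dp * p)‖ := by
    have hst : star (q * (dp * p)) = p * (dp * q) := by
      rw [star_mul, star_mul, hstarp, hstardp, hstarq, mul_assoc]
    have h : ‖ContinuousLinearMap.adjoint (q * (dp * p))‖ = ‖q * (dp * p)‖ :=
      LinearIsometryEquiv.norm_map _ _
    rw [← ContinuousLinearMap.star_eq_adjoint, hst] at h
    exact h
  -- norm of the second-order off-diagonal block
  have hprod1 : ‖q * (dp * (dH * p))‖ ≤ ‖dH‖ * ‖q * (dp * p)‖ := by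
    have hrw : q * (dp * (dH * p)) = (q * (dp * p)) * (dH * p) := by
      rw [← mul_assoc, ← hqdp, mul_assoc]
    rw [hrw]
    calc ‖(q * (dp * p)) * (dH * p)‖ ≤ ‖q * (dp * p)‖ * ‖dH * p‖ := norm_mul_le _ _
    _ ≤ ‖q * (dp * p)‖ * (‖dH‖ * ‖p‖) :=
        mul_le_mul_of_nonneg_left (norm_mul_le _ _) (norm_nonneg _)
    _ ≤ ‖q * (dp * p)‖ * (‖dH‖ * 1) :=
        mul_le_mul_of_nonneg_left (mul_le_mul_of_nonneg_left np (norm_nonneg dH))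
          (norm_nonneg _)
    _ = ‖dH‖ * ‖q * (dp * p)‖ := by ring
  have hprod2 : ‖q * (dH * (dp * p))‖ ≤ ‖dH‖ * ‖q * (dp * p)‖ := by
    have hrw : q * (dH * (dp * p)) = q * (dH * (q * (dp * p))) := by
      conv_lhs => rw [hdpp]
    rw [hrw]
    calc ‖q * (dH * (q * (dp * p)))‖ ≤ ‖q‖ * ‖dH * (q * (dp * p))‖ := norm_mul_le _ _
    _ ≤ 1 * ‖dH * (q * (dp * p))‖ := mul_le_mul_of_nonneg_right nq (norm_nonneg _)
    _ = ‖dH * (q * (dp * p))‖ := one_mul _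
    _ ≤ ‖dH‖ * ‖q * (dp * p)‖ := norm_mul_le _ _
  have hYnorm : ‖q * (ddp * p)‖ ≤ (4 * (‖dH‖ * ‖q * (dp * p)‖) + ‖ddH‖) / G := by
    have h1 := hgapop (ddp * p)
    have h2 : ‖A * (q * (ddp * p))‖ ≤ 4 * (‖dH‖ * ‖q * (dp * p)‖) + ‖ddH‖ := by
      rw [hAY]
      have t3 : ‖q * (ddH * p)‖ ≤ ‖ddH‖ := hqXp ddH
      have n1 := norm_sub_le ((q * (dp * (dH * p)) + q * (dp * (dH * p)))
        - (q * (dH * (dp * p)) + q * (dH * (dp * p)))) (q * (ddH * p))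
      have n2 := norm_sub_le (q * (dp * (dH * p)) + q * (dp * (dH * p)))
        (q * (dH * (dp * p)) + q * (dH * (dp * p)))
      have n3 := norm_add_le (q * (dp * (dH * p))) (q * (dp * (dH * p)))
      have n4 := norm_add_le (q * (dH * (dp * p))) (q * (dH * (dp * p)))
      linarith [hprod1, hprod2]
    calc ‖q * (ddp * p)‖ ≤ ‖A * (q * (ddp * p))‖ / G := h1
    _ ≤ (4 * (‖dH‖ * ‖q * (dp * p)‖) + ‖ddH‖) / G := by gcongr
  -- diagonal block norms
  have hfe : ‖p * (dp * (dp * p))‖ ≤ ‖q * (dp * p)‖ ^ 2 := by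
    have hrw : p * (dp * (dp * p)) = (p * (dp * q)) * (q * (dp * p)) := by
      conv_lhs => rw [hdpp]
      rw [mul_assoc p (dp * q), mul_assoc dp q, hqq']
    rw [hrw]
    calc ‖(p * (dp * q)) * (q * (dp * p))‖ ≤ ‖p * (dp * q)‖ * ‖q * (dp * p)‖ := norm_mul_le _ _
    _ = ‖q * (dp * p)‖ ^ 2 := by rw [hfeq]; ring
  have hef : ‖q * (dp * (dp * q))‖ ≤ ‖q * (dp * p)‖ ^ 2 := by
    have hrw : q * (dp * (dp * q)) = (q * (dp * p)) * (p * (dp * q)) := by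
      conv_lhs => rw [hdpq]
      rw [mul_assoc q (dp * p), mul_assoc dp p, hpp']
    rw [hrw]
    calc ‖(q * (dp * p)) * (p * (dp * q))‖ ≤ ‖q * (dp * p)‖ * ‖p * (dp * q)‖ := norm_mul_le _ _
    _ = ‖q * (dp * p)‖ ^ 2 := by rw [hfeq]; ring
  have hZ1 : ‖p * (ddp * p)‖ ≤ 2 * ‖q * (dp * p)‖ ^ 2 := by
    rw [hdiag1, norm_neg]
    calc ‖p * (dp * (dp * p)) + p * (dp * (dp * p))‖
        ≤ ‖p * (dp * (dp * p))‖ + ‖p * (dp * (dp * p))‖ := norm_add_le _ _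
    _ ≤ 2 * ‖q * (dp * p)‖ ^ 2 := by linarith [hfe]
  have hZ2 : ‖q * (ddp * q)‖ ≤ 2 * ‖q * (dp * p)‖ ^ 2 := by
    rw [hdiag2]
    calc ‖q * (dp * (dp * q)) + q * (dp * (dp * q))‖
        ≤ ‖q * (dp * (dp * q))‖ + ‖q * (dp * (dp * q))‖ := norm_add_le _ _
    _ ≤ 2 * ‖q * (dp * p)‖ ^ 2 := by linarith [hef]
  have hZ3 : ‖p * (ddp * q)‖ = ‖q * (ddp * p)‖ := by
    have hst : star (q * (ddp * p)) = p * (ddp * q) := by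
      rw [star_mul, star_mul, hstarp, hstarddp, hstarq, mul_assoc]
    have h : ‖ContinuousLinearMap.adjoint (q * (ddp * p))‖ = ‖q * (ddp * p)‖ :=
      LinearIsometryEquiv.norm_map _ _
    rw [← ContinuousLinearMap.star_eq_adjoint, hst] at h
    exact h
  -- decomposition of P'' into blocks
  have hdecomp : ddp = (p * (ddp * p) + q * (ddp * q)) + (p * (ddp * q) + q * (ddp * p)) := by
    have h1 : ddp = (p + q) * (ddp * (p + q)) := by rw [hpq1, mul_one, one_mul]
    have hperm : ∀ (a b c d : EuclideanSpace ℂ (Fin n) →L[ℂ] EuclideanSpace ℂ (Fin n)),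
        (a + b) + (c + d) = (a + d) + (b + c) := fun a b c d => by abel
    conv_lhs => rw [h1, mul_add, add_mul, mul_add, mul_add]
    exact hperm _ _ _ _
  have hb1 : ‖p * (ddp * p) + q * (ddp * q)‖ ≤ max ‖p * (ddp * p)‖ ‖q * (ddp * q)‖ := by
    apply block_norm_le p p _ _ hPsas hpp hPsas hpp
    · exact hpp' _
    · rw [← hq_def]; exact hqq' _
    · rw [mul_assoc, mul_assoc, hpp]
    · rw [← hq_def, mul_assoc, mul_assoc, hqq]
  have hb2 : ‖p * (ddp * q) + q * (ddp * p)‖ ≤ max ‖p * (ddp * q)‖ ‖q * (ddp * p)‖ := by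
    apply block_norm_le p q _ _ hPsas hpp hqadj hqq
    · exact hpp' _
    · rw [← hq_def]; exact hqq' _
    · rw [mul_assoc, mul_assoc, hqq]
    · rw [show (1 : EuclideanSpace ℂ (Fin n) →L[ℂ] EuclideanSpace ℂ (Fin n)) - q = p by
        rw [hq_def]; exact sub_sub_cancel 1 p, mul_assoc, mul_assoc, hpp]
  -- final assembly
  have hmain : ‖ddp‖ ≤ 2 * ‖q * (dp * p)‖ ^ 2 + (4 * (‖dH‖ * ‖q * (dp * p)‖) + ‖ddH‖) / G := by
    have hmax1 : max ‖p * (ddp * p)‖ ‖q * (ddp * q)‖ ≤ 2 * ‖q * (dp * p)‖ ^ 2 := max_le hZ1 hZ2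
    have hmax2 : max ‖p * (ddp * q)‖ ‖q * (ddp * p)‖
        ≤ (4 * (‖dH‖ * ‖q * (dp * p)‖) + ‖ddH‖) / G := by
      apply max_le _ hYnorm
      rw [hZ3]; exact hYnorm
    calc ‖ddp‖ = ‖(p * (ddp * p) + q * (ddp * q)) + (p * (ddp * q) + q * (ddp * p))‖ := by
          rw [← hdecomp]
    _ ≤ ‖p * (ddp * p) + q * (ddp * q)‖ + ‖p * (ddp * q) + q * (ddp * p)‖ := norm_add_le _ _
    _ ≤ 2 * ‖q * (dp * p)‖ ^ 2 + (4 * (‖dH‖ * ‖q * (dp * p)‖) + ‖ddH‖) / G := by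
          linarith [hb1, hb2]
  -- numeric bookkeeping
  have hee0 : (0:ℝ) ≤ ‖q * (dp * p)‖ := norm_nonneg _
  have ha0 : (0:ℝ) ≤ ‖dH‖ := norm_nonneg _
  have hb0 : (0:ℝ) ≤ ‖ddH‖ := norm_nonneg _
  have e1 : ‖q * (dp * p)‖ ^ 2 ≤ (‖dH‖ / G) ^ 2 := by nlinarith [he_bound]
  have e2 : (4 * (‖dH‖ * ‖q * (dp * p)‖) + ‖ddH‖) / G
      ≤ (4 * (‖dH‖ * (‖dH‖ / G)) + ‖ddH‖) / G := by gcongr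
  have e3 : (4 * (‖dH‖ * (‖dH‖ / G)) + ‖ddH‖) / G = 4 * ‖dH‖ ^ 2 / G ^ 2 + ‖ddH‖ / G := by
    ring
  have e4 : (‖dH‖ / G) ^ 2 = ‖dH‖ ^ 2 / G ^ 2 := div_pow _ _ _
  have e5 : (0:ℝ) ≤ ‖dH‖ ^ 2 / G ^ 2 := by positivity
  have e6 : (0:ℝ) ≤ ‖ddH‖ / G := by positivity
  have e7 : 8 * ‖dH‖ ^ 2 / G ^ 2 = 8 * (‖dH‖ ^ 2 / G ^ 2) := by ring
  have e8 : 2 * ‖ddH‖ / G = 2 * (‖ddH‖ / G) := by ring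
  have e9 : 4 * ‖dH‖ ^ 2 / G ^ 2 = 4 * (‖dH‖ ^ 2 / G ^ 2) := by ring
  linarith [hmain, e1, e2, e3, e4, e5, e6, e7, e8, e9]
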